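/- Let q be a real number with q ≠ 0 and q ≠ 1, let n ≥ 1, let λ_1, …, λ_n be real numbers, and let f_1, …, f_n : ℝ → ℝ satisfy the q-eigenfunction equations (∂_q f_j)(x) = λ_j · f_j(x) for all x ≠ 0 and all j. Then for every x ≠ 0 the q-Wronskian factors as a Vandermonde determinant times the product of the functions: W_n^q(f_1, …, f_n)(x) = (∏_{1 ≤ i < j ≤ n} (λ_j − λ_i)) · f_1(x) f_2(x) ⋯ f_n(x). -/
import Mathlib


/-- The `q`-derivative: `(∂_q f)(x) = (f(qx) − f(x))/(x(q−1))` (zero at `x = 0`). -/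
noncomputable def qDeriv (q : ℝ) (f : ℝ → ℝ) : ℝ → ℝ :=
  fun x => (f (q * x) - f x) / (x * (q - 1))

/-- The q-Wronskian `W_n^q(f_1,…,f_n)(x) = det((∂_q^{i−1} f_j)(x))`. -/
noncomputable def qWronskian (q : ℝ) (n : ℕ) (f : Fin n → ℝ → ℝ) (x : ℝ) : ℝ :=
  Matrix.det (Matrix.of fun i j : Fin n => (qDeriv q)^[(i : ℕ)] (f j) x)

lemma qDeriv_iter_eigen (q : ℝ) (hq0 : q ≠ 0) (lam : ℝ) (f : ℝ → ℝ)
    (hf : ∀ x : ℝ, x ≠ 0 → qDeriv q f x = lam * f x) :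
    ∀ k : ℕ, ∀ x : ℝ, x ≠ 0 → (qDeriv q)^[k] f x = lam ^ k * f x := by
  intro k
  induction k with
  | zero => intro x hx; simp
  | succ k ih =>
    intro x hx
    rw [Function.iterate_succ_apply']
    have hqx : q * x ≠ 0 := mul_ne_zero hq0 hx
    have : qDeriv q ((qDeriv q)^[k] f) x
        = (lam ^ k * f (q * x) - lam ^ k * f x) / (x * (q - 1)) := by
      simp only [qDeriv, ih (q * x) hqx, ih x hx]
    rw [this]
    have h2 := hf x hx
    simp only [qDeriv] at h2
    rw [← mul_sub, mul_div_assoc, h2, pow_succ]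
    ring

theorem qWronskian_eigenfunctions (q : ℝ) (hq0 : q ≠ 0) (hq1 : q ≠ 1)
    (n : ℕ) (hn : 1 ≤ n) (lam : Fin n → ℝ) (f : Fin n → ℝ → ℝ)
    (hf : ∀ j : Fin n, ∀ x : ℝ, x ≠ 0 → qDeriv q (f j) x = lam j * f j x) :
    ∀ x : ℝ, x ≠ 0 →
      qWronskian q n f x =
        (∏ i : Fin n, ∏ j ∈ Finset.Ioi i, (lam j - lam i)) * ∏ j : Fin n, f j x := by
  intro x hx
  have hM : (Matrix.of fun i j : Fin n => (qDeriv q)^[(i : ℕ)] (f j) x)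
      = Matrix.of fun i j : Fin n => f j x * (Matrix.vandermonde lam).transpose i j := by
    ext i j
    simp [Matrix.vandermonde, qDeriv_iter_eigen q hq0 (lam j) (f j) (hf j) i x hx,
      mul_comm]
  rw [qWronskian, hM, Matrix.det_mul_row (fun j => f j x), Matrix.det_transpose,
    Matrix.det_vandermonde, mul_comm]
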